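/- Let p be a prime and k an algebraically closed field of characteristic zero. Let (X^g)_{g∈G} be a connected grading of the matrix algebra M_p(k) by a group G such that every homogeneous component X^g has dimension at most 1 (a fine grading). Then G is isomorphic to C_p × C_p = (ZMod p) × (ZMod p), and every nonzero homogeneous component is exactly one-dimensional with support all of G. -/

import Mathlib

open Module DirectSum


lemma auxUnitRight {n k : Type*} [Fintype n] [DecidableEq n] [Field k]
    {x y : Matrix n n k} (h : IsUnit (x * y)) : IsUnit y := by
  rw [Matrix.isUnit_iff_isUnit_det] at h ⊢
  rw [Matrix.det_mul] at h
  exact isUnit_of_mul_isUnit_right h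

lemma auxUnitLeft {n k : Type*} [Fintype n] [DecidableEq n] [Field k]
    {x y : Matrix n n k} (h : IsUnit (x * y)) : IsUnit x := by
  rw [Matrix.isUnit_iff_isUnit_det] at h ⊢
  rw [Matrix.det_mul] at h
  exact isUnit_of_mul_isUnit_left h

lemma auxUnitSmul {n k : Type*} [Fintype n] [DecidableEq n] [Field k]
    {c : k} {M : Matrix n n k} (h : IsUnit (c • M)) : IsUnit M := by
  rw [Matrix.isUnit_iff_isUnit_det] at h ⊢
  rw [Matrix.det_smul] at h
  exact isUnit_of_mul_isUnit_right h

lemma auxSpan {k V : Type*} [Field k] [AddCommGroup V] [Module k V] [FiniteDimensional k V]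
    {W : Submodule k V} (hW : finrank k W ≤ 1) {x : V} (hx : x ∈ W) (hx0 : x ≠ 0) :
    W = Submodule.span k {x} := by
  refine (Submodule.eq_of_le_of_finrank_le ?_ ?_).symm
  · rwa [Submodule.span_le, Set.singleton_subset_iff]
  · rwa [finrank_span_singleton hx0]

/-- Let `p` be a prime and `k` an algebraically closed field of characteristic zero.  If
`(X^g)_{g∈G}` is a connected fine grading of `M_p(k)` (every homogeneous component of
dimension at most 1), then `G ≅ C_p × C_p` and every homogeneous component is exactly
one-dimensional, with support all of `G`. -/
theorem stmt14 (p : ℕ) (hp : p.Prime) (k : Type*) [Field k] [IsAlgClosed k] [CharZero k]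
    (G : Type*) [Group G] (X : G → Submodule k (Matrix (Fin p) (Fin p) k))
    (hind : iSupIndep X) (hsup : (⨆ g, X g) = ⊤)
    (hmul : ∀ g h, X g * X h ≤ X (g * h))
    (hconn : Subgroup.closure {g | X g ≠ ⊥} = ⊤)
    (hfine : ∀ g, Module.finrank k (X g) ≤ 1) :
    Nonempty (G ≃* Multiplicative (ZMod p × ZMod p)) ∧
    (∀ g, Module.finrank k (X g) = 1) ∧
    {g | X g ≠ ⊥} = Set.univ := by
  classical
  set A := Matrix (Fin p) (Fin p) k with hA
  haveI : Fact p.Prime := ⟨hp⟩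
  haveI : NeZero p := ⟨hp.ne_zero⟩
  haveI : Nonempty (Fin p) := ⟨⟨0, hp.pos⟩⟩
  haveI : Nontrivial A := inferInstance
  have hXspan : ∀ {g : G} {x : A}, x ∈ X g → x ≠ 0 → X g = Submodule.span k {x} :=
    fun {g x} hx hx0 => auxSpan (hfine g) hx hx0
  have hD : DirectSum.IsInternal X :=
    (DirectSum.isInternal_submodule_iff_iSupIndep_and_iSup_eq_top X).mpr ⟨hind, hsup⟩
  letI : DirectSum.Decomposition X := hD.chooseDecomposition
  set u : A := ((DirectSum.decompose X (1 : A)) 1 : A) with hu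
  have key : ∀ g, ∀ x ∈ X g, x * u = x := by
    intro g x hx
    have h1 : (x : A) = ∑ h ∈ (DirectSum.decompose X (1 : A)).support,
        x * ((DirectSum.decompose X (1 : A)) h : A) := by
      rw [← Finset.mul_sum, DirectSum.sum_support_decompose, mul_one]
    have h2 : x = ∑ h ∈ (DirectSum.decompose X (1 : A)).support,
        ((DirectSum.decompose X (x * ((DirectSum.decompose X (1 : A)) h : A))) g : A) := by
      conv_lhs => rw [← DirectSum.decompose_of_mem_same X hx]
      conv_lhs => rw [h1]
      rw [DirectSum.decompose_sum]
      rw [DFinsupp.finset_sum_apply, AddSubmonoidClass.coe_finset_sum]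
    have h3 : ∀ h ∈ (DirectSum.decompose X (1 : A)).support,
        ((DirectSum.decompose X (x * ((DirectSum.decompose X (1 : A)) h : A))) g : A)
          = if h = 1 then x * u else 0 := by
      intro h _
      have hmem : x * ((DirectSum.decompose X (1 : A)) h : A) ∈ X (g * h) :=
        hmul g h (Submodule.mul_mem_mul hx (SetLike.coe_mem _))
      by_cases hh : h = 1
      · subst hh
        rw [if_pos rfl, ← hu]
        rw [mul_one] at hmem
        exact DirectSum.decompose_of_mem_same X hmem
      · rw [if_neg hh]
        exact DirectSum.decompose_of_mem_ne X hmem (by simpa using hh)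
    have h4 : x = if (1 : G) ∈ (DirectSum.decompose X (1 : A)).support then x * u else 0 := by
      conv_lhs => rw [h2]
      rw [Finset.sum_congr rfl h3, Finset.sum_ite_eq' _ (1 : G)]
    by_cases h1s : (1 : G) ∈ (DirectSum.decompose X (1 : A)).support
    · rw [if_pos h1s] at h4; exact h4.symm
    · rw [if_neg h1s] at h4
      rw [DFinsupp.notMem_support_iff] at h1s
      rw [hu, h1s]
      simp [h4]
  have hall : ∀ a : A, a * u = a := by
    intro a
    have ha : a ∈ ⨆ g, X g := hsup ▸ Submodule.mem_top
    refine Submodule.iSup_induction X (motive := fun a => a * u = a) ha (fun g x hx => key g x hx) ?_ ?_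
    · simp
    · intro y z hy hz; rw [add_mul, hy, hz]
  have hu1 : u = 1 := by rw [← one_mul u, hall 1]
  have h1mem : (1 : A) ∈ X 1 := by rw [← hu1]; exact SetLike.coe_mem _
  set N : Set G := {g | ∀ x ∈ X g, ¬ IsUnit x} with hN
  set I : Submodule k A := ⨆ (g : N), X (g : G) with hI
  -- the key multiplication stability
  have hXspan : ∀ {g : G} {x : A}, x ∈ X g → x ≠ 0 → X g = Submodule.span k {x} :=
    fun {g x} hx hx0 => auxSpan (hfine g) hx hx0
  have hNunit : ∀ {g : G} {z : A}, z ∈ X g → z ≠ 0 → ¬ IsUnit z → g ∈ N := by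
    intro g z hz hz0 hzu w hw
    rw [hXspan hz hz0, Submodule.mem_span_singleton] at hw
    obtain ⟨c, rfl⟩ := hw
    intro hcu
    exact hzu (auxUnitSmul hcu)
  have hmull : ∀ y ∈ I, ∀ a : A, a * y ∈ I := by
    intro y hy
    refine Submodule.iSup_induction _ (motive := fun y => ∀ a : A, a * y ∈ I) hy ?_ ?_ ?_
    · rintro ⟨g, hg⟩ y hyg a
      have ha : a ∈ ⨆ h, X h := hsup ▸ Submodule.mem_top
      refine Submodule.iSup_induction X (motive := fun a => a * y ∈ I) ha ?_ (by simp) ?_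
      · intro h x hx
        have hmem : x * y ∈ X (h * g) := hmul h g (Submodule.mul_mem_mul hx hyg)
        by_cases h0 : x * y = 0
        · rw [h0]; exact zero_mem I
        · have hng : (h * g) ∈ N := hNunit hmem h0 (fun hu => hg y hyg (auxUnitRight hu))
          exact le_iSup (fun (g : N) => X (g : G)) ⟨h * g, hng⟩ hmem
      · intro b c hb hc; rw [add_mul]; exact add_mem hb hc
    · intro a; simp
    · intro b c hb hc a; rw [mul_add]; exact add_mem (hb a) (hc a)
  have hmulr : ∀ y ∈ I, ∀ a : A, y * a ∈ I := by
    intro y hy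
    refine Submodule.iSup_induction _ (motive := fun y => ∀ a : A, y * a ∈ I) hy ?_ ?_ ?_
    · rintro ⟨g, hg⟩ y hyg a
      have ha : a ∈ ⨆ h, X h := hsup ▸ Submodule.mem_top
      refine Submodule.iSup_induction X (motive := fun a => y * a ∈ I) ha ?_ (by simp) ?_
      · intro h x hx
        have hmem : y * x ∈ X (g * h) := hmul g h (Submodule.mul_mem_mul hyg hx)
        by_cases h0 : y * x = 0
        · rw [h0]; exact zero_mem I
        · have hng : (g * h) ∈ N := hNunit hmem h0 (fun hu => hg y hyg (auxUnitLeft hu))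
          exact le_iSup (fun (g : N) => X (g : G)) ⟨g * h, hng⟩ hmem
      · intro b c hb hc; rw [mul_add]; exact add_mem hb hc
    · intro a; simp
    · intro b c hb hc a; rw [add_mul]; exact add_mem (hb a) (hc a)
  -- 1 ∉ I
  have h1I : (1 : A) ∉ I := by
    intro h1
    have h1N : (1 : G) ∉ N := fun h => h 1 h1mem isUnit_one
    have hdisj : Disjoint (X 1) (⨆ g ∈ N, X g) := hind.disjoint_biSup h1N
    have : I = ⨆ g ∈ N, X g := by rw [hI, iSup_subtype]
    rw [this] at h1
    exact one_ne_zero ((Submodule.disjoint_def.mp hdisj) 1 h1mem h1)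
  -- two-sided ideal, simplicity
  set T : TwoSidedIdeal A := TwoSidedIdeal.mk' I (zero_mem I) (fun ha hb => add_mem ha hb)
    (fun ha => neg_mem ha) (fun {a b} hb => hmull b hb a) (fun {a b} ha => hmulr a ha b) with hT
  have hTne : T ≠ ⊤ := by
    intro h
    apply h1I
    have := TwoSidedIdeal.mem_top (R := A) (x := 1)
    rw [← h, hT, TwoSidedIdeal.mem_mk'] at this
    exact this
  have hTbot : T = ⊥ := (IsSimpleOrder.eq_bot_or_eq_top T).resolve_right hTne
  have hIzero : ∀ y ∈ I, y = 0 := by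
    intro y hy
    have : y ∈ T := by rw [hT, TwoSidedIdeal.mem_mk']; exact hy
    rwa [hTbot, TwoSidedIdeal.mem_bot] at this
  have hunit : ∀ g, X g ≠ ⊥ → ∃ x ∈ X g, IsUnit x := by
    intro g hg
    by_contra h
    push_neg at h
    apply hg
    rw [Submodule.eq_bot_iff]
    intro y hy
    exact hIzero y (le_iSup (fun (g : N) => X (g : G)) ⟨g, fun x hx => h x hx⟩ hy)
  have hunit' : ∀ g : G, ∃ x : A, X g ≠ ⊥ → x ∈ X g ∧ IsUnit x := by
    intro g
    by_cases hg : X g ≠ ⊥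
    · obtain ⟨x, hx, hxu⟩ := hunit g hg
      exact ⟨x, fun _ => ⟨hx, hxu⟩⟩
    · exact ⟨0, fun h => absurd h hg⟩
  choose x hx using hunit'
  have hS1 : X (1 : G) ≠ ⊥ := (Submodule.ne_bot_iff _).mpr ⟨1, h1mem, one_ne_zero⟩
  have hSmul : ∀ {g h : G}, X g ≠ ⊥ → X h ≠ ⊥ → X (g * h) ≠ ⊥ := by
    intro g h hg hh
    refine (Submodule.ne_bot_iff _).mpr ⟨x g * x h, hmul g h
      (Submodule.mul_mem_mul (hx g hg).1 (hx h hh).1), ?_⟩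
    exact ((hx g hg).2.mul (hx h hh).2).ne_zero
  have hSpow : ∀ {g : G}, X g ≠ ⊥ → ∀ n : ℕ, X (g ^ n) ≠ ⊥ := by
    intro g hg n
    induction n with
    | zero => simpa using hS1
    | succ m ih => rw [pow_succ]; exact hSmul ih hg
  haveI hSfin : Finite {g | X g ≠ ⊥} := by
    have hli : LinearIndependent k (fun g : {g | X g ≠ ⊥} => x (g : G)) := by
      refine iSupIndep.linearIndependent _ (hind.comp Subtype.val_injective) ?_ ?_
      · exact fun g => (hx g g.2).1
      · exact fun g => (hx g g.2).2.ne_zero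
    exact hli.finite
  -- closure under inverses
  have hSinv : ∀ {g : G}, X g ≠ ⊥ → X g⁻¹ ≠ ⊥ := by
    intro g hg
    have hfo : IsOfFinOrder g := by
      obtain ⟨m, n, hmn, he⟩ := Finite.exists_ne_map_eq_of_infinite
        (fun n : ℕ => (⟨g ^ n, hSpow hg n⟩ : {g | X g ≠ ⊥}))
      have heq : g ^ m = g ^ n := congrArg Subtype.val he
      rcases Nat.lt_or_ge m n with h | h
      · refine isOfFinOrder_iff_pow_eq_one.mpr ⟨n - m, by omega, ?_⟩
        have h2 : g ^ m * g ^ (n - m) = g ^ m * 1 := by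
          rw [mul_one, ← pow_add, show m + (n - m) = n by omega, ← heq]
        exact mul_left_cancel h2
      · have hmn' : n < m := by omega
        refine isOfFinOrder_iff_pow_eq_one.mpr ⟨m - n, by omega, ?_⟩
        have h2 : g ^ n * g ^ (m - n) = g ^ n * 1 := by
          rw [mul_one, ← pow_add, show n + (m - n) = m by omega, heq]
        exact mul_left_cancel h2
    have hd : 0 < orderOf g := hfo.orderOf_pos
    have hinv : g⁻¹ = g ^ (orderOf g - 1) := by
      refine inv_eq_of_mul_eq_one_right ?_
      rw [← pow_succ', show orderOf g - 1 + 1 = orderOf g by omega, pow_orderOf_eq_one]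
    rw [hinv]
    exact hSpow hg _
  -- the support subgroup
  set Ssub : Subgroup G :=
    { carrier := {g | X g ≠ ⊥}
      one_mem' := hS1
      mul_mem' := fun hg hh => hSmul hg hh
      inv_mem' := fun hg => hSinv hg } with hSsub
  have hStop : Ssub = ⊤ := by
    rw [← Subgroup.closure_eq Ssub]
    exact hconn
  have hSuniv : ∀ g : G, X g ≠ ⊥ := by
    intro g
    have : g ∈ Ssub := hStop ▸ Subgroup.mem_top g
    exact this
  have hxmem : ∀ g : G, x g ∈ X g := fun g => (hx g (hSuniv g)).1
  have hxu : ∀ g : G, IsUnit (x g) := fun g => (hx g (hSuniv g)).2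
  have hfr : ∀ g, Module.finrank k (X g) = 1 := by
    intro g
    rw [hXspan (hxmem g) (hxu g).ne_zero]
    exact finrank_span_singleton (hxu g).ne_zero
  -- a basis of A indexed by G
  have hli : LinearIndependent k x :=
    iSupIndep.linearIndependent _ hind hxmem (fun g => (hxu g).ne_zero)
  have hspan : ⊤ ≤ Submodule.span k (Set.range x) := by
    rw [← hsup]
    refine iSup_le fun g => ?_
    rw [hXspan (hxmem g) (hxu g).ne_zero]
    exact Submodule.span_mono (Set.singleton_subset_iff.mpr ⟨g, rfl⟩)
  set b : Basis G k A := Basis.mk hli hspan with hb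
  haveI : Fintype G := FiniteDimensional.fintypeBasisIndex b
  have hcard : Nat.card G = p ^ 2 := by
    rw [Nat.card_eq_fintype_card, ← Module.finrank_eq_card_basis b]
    show finrank k (Matrix (Fin p) (Fin p) k) = p ^ 2
    rw [Module.finrank_matrix, Module.finrank_self, Fintype.card_fin]
    ring
  -- noncommutativity of A
  have hnc : ¬ (∀ a c : A, a * c = c * a) := by
    intro hcomm
    have hp2 : 2 ≤ p := hp.two_le
    set i0 : Fin p := ⟨0, by omega⟩
    set i1 : Fin p := ⟨1, by omega⟩
    have hne : i0 ≠ i1 := by simp [i0, i1, Fin.ext_iff]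
    have := hcomm (Matrix.single i0 i0 1) (Matrix.single i0 i1 1)
    rw [Matrix.single_mul_single_same, Matrix.single_mul_single_of_ne (h := hne.symm)] at this
    have h01 := congrFun (congrFun this i0) i1
    rw [Matrix.single_apply_same] at h01
    simp at h01
  -- no element of order p^2
  have hnotcyc : ∀ g : G, orderOf g ≠ p ^ 2 := by
    intro g hg
    have hztop : Subgroup.zpowers g = ⊤ := by
      apply Subgroup.eq_top_of_card_eq
      rw [Nat.card_zpowers, hg, hcard]
    have hfo : IsOfFinOrder g := orderOf_pos_iff.mp (by rw [hg]; exact pow_pos hp.pos 2)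
    have hpows : ∀ h : G, ∃ n : ℕ, g ^ n = h := by
      intro h
      have : h ∈ Subgroup.zpowers g := hztop ▸ Subgroup.mem_top h
      rw [← hfo.mem_powers_iff_mem_zpowers] at this
      exact (Submonoid.mem_powers_iff h g).mp this
    -- powers of x g
    have hxpow : ∀ n : ℕ, (x g) ^ n ∈ X (g ^ n) := by
      intro n
      induction n with
      | zero => simpa using h1mem
      | succ m ih =>
        rw [pow_succ, pow_succ]
        exact hmul _ _ (Submodule.mul_mem_mul ih (hxmem g))
    have hspanT : Submodule.span k (Set.range (fun n : ℕ => (x g) ^ n)) = ⊤ := by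
      rw [eq_top_iff, ← hsup]
      refine iSup_le fun h => ?_
      obtain ⟨n, rfl⟩ := hpows h
      rw [hXspan (hxpow n) ((hxu g).pow n).ne_zero]
      exact Submodule.span_mono (Set.singleton_subset_iff.mpr ⟨n, rfl⟩)
    apply hnc
    intro a c
    have ha : a ∈ Submodule.span k (Set.range (fun n : ℕ => (x g) ^ n)) := by
      rw [hspanT]; trivial
    have hc : c ∈ Submodule.span k (Set.range (fun n : ℕ => (x g) ^ n)) := by
      rw [hspanT]; trivial
    refine Submodule.span_induction
      (p := fun a _ => ∀ c ∈ Submodule.span k (Set.range (fun n : ℕ => (x g) ^ n)), a * c = c * a)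
      ?_ ?_ ?_ ?_ ha c hc
    · rintro _ ⟨m, rfl⟩ c hc
      refine Submodule.span_induction (p := fun c _ => (x g) ^ m * c = c * (x g) ^ m)
        ?_ ?_ ?_ ?_ hc
      · rintro _ ⟨n, rfl⟩
        exact (Commute.refl (x g)).pow_pow m n
      · simp
      · intro u v _ _ hu hv; rw [mul_add, add_mul, hu, hv]
      · intro r u _ hu
        rw [Algebra.mul_smul_comm, Algebra.smul_mul_assoc, hu]
    · intro c _; simp
    · intro u v _ _ hu hv c hc; rw [add_mul, mul_add, hu c hc, hv c hc]
    · intro r u _ hu c hc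
      rw [Algebra.smul_mul_assoc, Algebra.mul_smul_comm, hu c hc]
  -- exponent p
  have hexp : ∀ g : G, g ^ p = 1 := by
    intro g
    have hdvd : orderOf g ∣ p ^ 2 := hcard ▸ orderOf_dvd_natCard g
    obtain ⟨i, hi, he⟩ := (Nat.dvd_prime_pow hp).mp hdvd
    rcases Nat.lt_or_ge i 2 with h2 | h2
    · apply orderOf_dvd_iff_pow_eq_one.mp
      rw [he]
      calc p ^ i ∣ p ^ 1 := pow_dvd_pow p (by omega)
        _ = p := pow_one p
    · have hi2 : i = 2 := by omega
      rw [hi2] at he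
      exact absurd he (hnotcyc g)
  -- commutativity
  have hGcomm : ∀ a b : G, a * b = b * a := IsPGroup.commutative_of_card_eq_prime_sq hcard
  letI : CommGroup G := { (inferInstance : Group G) with mul_comm := hGcomm }
  haveI : Module (ZMod p) (Additive G) := AddCommGroup.zmodModule (by
    intro a
    show p • a = (0 : Additive G)
    rw [show a = Additive.ofMul (Additive.toMul a) from rfl, ← ofMul_pow, hexp, ofMul_one])
  haveI : Module.Finite (ZMod p) (Additive G) := Module.Finite.of_finite (R := ZMod p)
  have hfr2 : Module.finrank (ZMod p) (Additive G) = 2 := by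
    have hc := card_eq_pow_finrank (K := ZMod p) (V := Additive G)
    rw [ZMod.card, Fintype.card_eq_nat_card] at hc
    have hcc : Nat.card (Additive G) = p ^ 2 := by
      rw [Nat.card_congr (Additive.toMul (α := G))]
      exact hcard
    rw [hcc] at hc
    exact (Nat.pow_right_injective hp.two_le hc.symm)
  have hfrt : Module.finrank (ZMod p) (ZMod p × ZMod p) = 2 := by
    rw [Module.finrank_prod, Module.finrank_self]
  have hEquiv : Nonempty ((Additive G) ≃ₗ[ZMod p] (ZMod p × ZMod p)) :=
    FiniteDimensional.nonempty_linearEquiv_of_finrank_eq (hfr2.trans hfrt.symm)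
  obtain ⟨e⟩ := hEquiv
  refine ⟨⟨AddEquiv.toMultiplicativeRight e.toAddEquiv⟩, hfr, ?_⟩
  exact Set.eq_univ_iff_forall.mpr hSuniv
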